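/- For every integer m ≥ 1 and every integer n ≥ 0 the polynomial identity x^m p_n(x;m) = ((−1)^m / (2^m (1/2)_m)) Σ_{σ=0}^{m} ŝ_0(m,σ) p_{n+σ}(x;0) holds in ℚ[x] (equivalently in ℂ[x]); here 2^m (1/2)_m = (2m−1)!!. (This is the paper's identity (2.29) with the correct constant.) -/

import Mathlib

open Polynomial Finset

/-- The polynomials `p_n(x; α)` defined recursively by
`p_0 = 1`, `p_{n+1} = x² p_n'' − x(2x − 1 − 2α) p_n' − ((2α+1)x − α²) p_n`. -/
noncomputable def pseq (α : ℂ) : ℕ → ℂ[X]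
  | 0 => 1
  | n + 1 =>
      X ^ 2 * derivative (derivative (pseq α n))
        - X * (2 * X - C (1 + 2 * α)) * derivative (pseq α n)
        - (C (2 * α + 1) * X - C (α ^ 2)) * pseq α n

/-- The 0-modified Stirling numbers of the first kind `ŝ₀(m,σ)`: the coefficients in
`∏_{j=0}^{m−1} (X − j²) = Σ_{σ=0}^{m} ŝ₀(m,σ) X^σ`. -/
noncomputable def shat0 (m σ : ℕ) : ℂ :=
  (∏ j ∈ range m, (X - C ((j : ℂ) ^ 2))).coeff σ

noncomputable def Lop (α : ℂ) : ℂ[X] →ₗ[ℂ] ℂ[X] where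
  toFun p := X ^ 2 * derivative (derivative p)
        - X * (2 * X - C (1 + 2 * α)) * derivative p
        - (C (2 * α + 1) * X - C (α ^ 2)) * p
  map_add' p q := by simp only [derivative_add]; ring
  map_smul' c p := by
    simp only [smul_eq_C_mul, derivative_C_mul, RingHom.id_apply]; ring

lemma Lop_apply (α : ℂ) (p : ℂ[X]) : Lop α p =
    X ^ 2 * derivative (derivative p)
        - X * (2 * X - C (1 + 2 * α)) * derivative p
        - (C (2 * α + 1) * X - C (α ^ 2)) * p := rfl

lemma pseq_succ (α : ℂ) (n : ℕ) : pseq α (n + 1) = Lop α (pseq α n) := rfl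

lemma Lop_inter (α : ℂ) (q : ℂ[X]) : Lop α (X * q) = X * Lop (α + 1) q := by
  simp only [Lop_apply, derivative_mul, derivative_X, one_mul, map_add, map_mul, map_one,
    map_ofNat, map_pow]
  ring

lemma Lop_inter_pow (m : ℕ) (q : ℂ[X]) :
    Lop 0 (X ^ m * q) = X ^ m * Lop (m : ℂ) q := by
  induction m generalizing q with
  | zero => simp
  | succ k ih =>
      have : (X : ℂ[X]) ^ (k + 1) * q = X ^ k * (X * q) := by ring
      rw [this, ih, Lop_inter]
      push_cast
      ring_nf

lemma pow_apply_Xpow (m n : ℕ) : ((Lop 0) ^ n) (X ^ m) = X ^ m * pseq (m : ℂ) n := by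
  induction n with
  | zero => simp [pseq]
  | succ k ih =>
      rw [pow_succ', Module.End.mul_apply, ih, Lop_inter_pow, ← pseq_succ]

lemma pow_apply_pseq0 (n σ : ℕ) : ((Lop 0) ^ n) (pseq 0 σ) = pseq 0 (n + σ) := by
  induction n with
  | zero => simp
  | succ k ih =>
      rw [pow_succ', Module.End.mul_apply, ih, ← pseq_succ]
      congr 1
      omega

lemma pseq0_eq (σ : ℕ) : pseq 0 σ = ((Lop 0) ^ σ) 1 := by
  have := pow_apply_pseq0 σ 0
  simpa [pseq] using this.symm

lemma Lop_Xpow (m : ℕ) : Lop 0 (X ^ m) =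
    C ((m : ℂ) ^ 2) * X ^ m - C (2 * (m : ℂ) + 1) * X ^ (m + 1) := by
  match m with
  | 0 => simp [Lop_apply]
  | 1 => simp [Lop_apply, map_ofNat]; ring
  | (k + 2) =>
      simp only [Lop_apply, derivative_X_pow]
      push_cast
      simp only [Nat.add_sub_cancel, show k + 2 - 1 = k + 1 from rfl,
        show k + 1 - 1 = k from rfl, derivative_mul, derivative_C, derivative_X_pow]
      push_cast
      simp only [map_add, map_one, map_ofNat, map_mul, map_pow, C_0]
      ring

noncomputable def cval (m : ℕ) : ℂ :=
  (-1) ^ m * 2 ^ m * (ascPochhammer ℂ m).eval (1 / 2 : ℂ)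

lemma cval_succ (m : ℕ) : cval (m + 1) = -(2 * (m : ℂ) + 1) * cval m := by
  simp only [cval, ascPochhammer_succ_right, eval_mul, eval_add, eval_X, eval_natCast]
  ring

lemma aeval_prod_one (m : ℕ) :
    (Polynomial.aeval (Lop 0 : Module.End ℂ ℂ[X])
        (∏ j ∈ range m, (X - C ((j : ℂ) ^ 2)))) 1 = C (cval m) * X ^ m := by
  induction m with
  | zero => simp [cval]
  | succ k ih =>
      rw [prod_range_succ, mul_comm, map_mul, Module.End.mul_apply, ih, map_sub, aeval_X, aeval_C,
        LinearMap.sub_apply, Module.algebraMap_end_apply]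
      have h1 : Lop 0 (C (cval k) * X ^ k) = C (cval k) * Lop 0 (X ^ k) := by
        rw [← smul_eq_C_mul, ← smul_eq_C_mul, map_smul]
      rw [h1, Lop_Xpow, smul_eq_C_mul, cval_succ]
      simp only [map_mul, map_add, map_pow, map_neg, map_one, map_ofNat]
      ring

lemma sum_shat_eq (m : ℕ) :
    ∑ σ ∈ range (m + 1), C (shat0 m σ) * pseq 0 σ
      = (Polynomial.aeval (Lop 0 : Module.End ℂ ℂ[X])
          (∏ j ∈ range m, (X - C ((j : ℂ) ^ 2)))) 1 := by
  have hdeg : (∏ j ∈ range m, (X - C ((j : ℂ) ^ 2))).natDegree < m + 1 := by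
    have : (∏ j ∈ range m, (X - C ((j : ℂ) ^ 2))).natDegree
        = ∑ j ∈ range m, (X - C ((j : ℂ) ^ 2)).natDegree := by
      apply natDegree_prod
      intro j _
      exact (monic_X_sub_C _).ne_zero
    rw [this]
    simp only [natDegree_X_sub_C, Finset.sum_const, smul_eq_mul, Finset.card_range, mul_one]
    omega
  rw [Polynomial.aeval_eq_sum_range' hdeg]
  rw [LinearMap.sum_apply]
  refine Finset.sum_congr rfl fun σ _ => ?_
  rw [LinearMap.smul_apply, ← pseq0_eq, smul_eq_C_mul]
  rfl

lemma poch_ne_zero (m : ℕ) : (ascPochhammer ℂ m).eval (1 / 2 : ℂ) ≠ 0 := by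
    induction m with
    | zero => simp
    | succ k ih =>
        rw [ascPochhammer_succ_eval]
        apply mul_ne_zero ih
        have : (1 / 2 : ℂ) + (k : ℕ) = ((1 / 2 + (k : ℝ) : ℝ) : ℂ) := by push_cast; ring
        rw [this, Complex.ofReal_ne_zero]
        positivity

lemma cval_ne_zero (m : ℕ) : cval m ≠ 0 := by
  have h := poch_ne_zero m
  simp only [cval]
  apply mul_ne_zero (mul_ne_zero _ _) h
  · exact pow_ne_zero _ (by norm_num)
  · exact pow_ne_zero _ (by norm_num)

theorem stmt12 (m : ℕ) (hm : 1 ≤ m) (n : ℕ) :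
    X ^ m * pseq (m : ℂ) n
      = C ((-1 : ℂ) ^ m / (2 ^ m * (ascPochhammer ℂ m).eval (1 / 2 : ℂ))) *
          ∑ σ ∈ range (m + 1), C (shat0 m σ) * pseq 0 (n + σ) := by
  have hkey : ∑ σ ∈ range (m + 1), C (shat0 m σ) * pseq 0 σ = C (cval m) * X ^ m := by
    rw [sum_shat_eq, aeval_prod_one]
  have hc := cval_ne_zero m
  have hX : (X : ℂ[X]) ^ m
      = C (cval m)⁻¹ * ∑ σ ∈ range (m + 1), C (shat0 m σ) * pseq 0 σ := by
    rw [hkey, ← mul_assoc, ← C_mul, inv_mul_cancel₀ hc, C_1, one_mul]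
  have h1 : X ^ m * pseq (m : ℂ) n = ((Lop 0) ^ n) (X ^ m) := (pow_apply_Xpow m n).symm
  rw [h1, hX, ← smul_eq_C_mul, map_smul, map_sum]
  have h2 : ∀ σ ∈ range (m + 1),
      ((Lop 0) ^ n) (C (shat0 m σ) * pseq 0 σ) = C (shat0 m σ) * pseq 0 (n + σ) := by
    intro σ _
    rw [← smul_eq_C_mul, map_smul, pow_apply_pseq0, smul_eq_C_mul]
  rw [Finset.sum_congr rfl h2, smul_eq_C_mul]
  congr 1
  rw [inv_eq_of_mul_eq_one_right (a := cval m)]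
  rw [cval]
  have h := poch_ne_zero m
  field_simp
  have : ((-1 : ℂ)) ^ m * (-1) ^ m = 1 := by
    rw [← pow_add]
    exact Even.neg_one_pow ⟨m, by ring⟩
  rw [sq]
  exact this
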